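/- Let α, β : ℝ → ℝ be continuous nonnegative functions with supp(α) ⊆ (1,2) and supp(β) ⊆ (3,4), and suppose α is not identically zero. Then there exists δ₀ ∈ (0,1) such that for all δ ∈ (0,δ₀], all s ∈ [0,1], and all x ∈ [3,4]: ∫₀ˣ [ (1−δ)²·√(a² + α(a) + s·β(a)) − (1+δ)²·√(a² + s·β(a)) ] da > 0. -/

import Mathlib

open Set

/-- Let `α, β` be continuous nonnegative functions with
`supp α ⊆ (1,2)`, `supp β ⊆ (3,4)`, and `α` not identically zero.  Then there is
`δ₀ ∈ (0,1)` such that for all `δ ∈ (0,δ₀]`, `s ∈ [0,1]`, and `x ∈ [3,4]`,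
`∫₀ˣ [(1−δ)²√(a² + α(a) + sβ(a)) − (1+δ)²√(a² + sβ(a))] da > 0`. -/
theorem agmon_distance_gap
    (α β : ℝ → ℝ)
    (hα : Continuous α) (hβ : Continuous β)
    (hαnn : ∀ x, 0 ≤ α x) (hβnn : ∀ x, 0 ≤ β x)
    (hαsupp : tsupport α ⊆ Set.Ioo 1 2) (hβsupp : tsupport β ⊆ Set.Ioo 3 4)
    (hαne : α ≠ 0) :
    ∃ δ₀ : ℝ, δ₀ ∈ Set.Ioo (0 : ℝ) 1 ∧
      ∀ δ ∈ Set.Ioc (0 : ℝ) δ₀, ∀ s ∈ Set.Icc (0 : ℝ) 1, ∀ x ∈ Set.Icc (3 : ℝ) 4,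
        0 < ∫ a in (0 : ℝ)..x,
          ((1 - δ) ^ 2 * Real.sqrt (a ^ 2 + α a + s * β a)
            - (1 + δ) ^ 2 * Real.sqrt (a ^ 2 + s * β a)) := by
  -- the "gap" function
  set φ : ℝ → ℝ := fun a => Real.sqrt (a ^ 2 + α a) - Real.sqrt (a ^ 2) with hφdef
  have hφcont : Continuous φ :=
    ((continuous_pow 2).add hα).sqrt.sub (continuous_pow 2).sqrt
  have hφnn : ∀ a, 0 ≤ φ a := by
    intro a
    have : Real.sqrt (a ^ 2) ≤ Real.sqrt (a ^ 2 + α a) :=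
      Real.sqrt_le_sqrt (by linarith [hαnn a])
    simpa [hφdef] using sub_nonneg.2 this
  set c : ℝ := ∫ a in (0:ℝ)..3, φ a with hcdef
  set M : ℝ := ∫ a in (0:ℝ)..4, Real.sqrt (a ^ 2 + β a) with hMdef
  -- positivity of c
  obtain ⟨a₀, ha₀⟩ : ∃ a, α a ≠ 0 := Function.ne_iff.1 hαne
  have ha₀mem : a₀ ∈ Set.Ioo (1:ℝ) 2 := hαsupp (subset_tsupport α ha₀)
  have hαa₀ : 0 < α a₀ := lt_of_le_of_ne (hαnn a₀) (Ne.symm ha₀)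
  have hφa₀ : 0 < φ a₀ := by
    have : Real.sqrt (a₀ ^ 2) < Real.sqrt (a₀ ^ 2 + α a₀) :=
      Real.sqrt_lt_sqrt (sq_nonneg a₀) (by linarith)
    simpa [hφdef] using sub_pos.2 this
  have hc : 0 < c := by
    rw [hcdef, intervalIntegral.integral_of_le (by norm_num : (0:ℝ) ≤ 3)]
    rw [MeasureTheory.setIntegral_pos_iff_support_of_nonneg_ae
      (Filter.Eventually.of_forall fun a => hφnn a)
      (hφcont.integrableOn_Ioc)]
    have hopen : IsOpen ({a : ℝ | 0 < φ a} ∩ Set.Ioo 1 2) :=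
      (isOpen_lt continuous_const hφcont).inter isOpen_Ioo
    have hsub : {a : ℝ | 0 < φ a} ∩ Set.Ioo 1 2 ⊆ Function.support φ ∩ Set.Ioc 0 3 := by
      rintro a ⟨h1, h2⟩
      exact ⟨ne_of_gt h1, ⟨by linarith [h2.1], by linarith [h2.2]⟩⟩
    calc (0:ENNReal) < MeasureTheory.volume ({a : ℝ | 0 < φ a} ∩ Set.Ioo 1 2) :=
          hopen.measure_pos _ ⟨a₀, hφa₀, ha₀mem⟩
      _ ≤ _ := MeasureTheory.measure_mono hsub
  -- β vanishes off (3,4), α vanishes off (1,2)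
  have hβ0 : ∀ a, a ∉ Set.Ioo (3:ℝ) 4 → β a = 0 := fun a ha =>
    image_eq_zero_of_notMem_tsupport (fun h => ha (hβsupp h))
  have hα0 : ∀ a, a ∉ Set.Ioo (1:ℝ) 2 → α a = 0 := fun a ha =>
    image_eq_zero_of_notMem_tsupport (fun h => ha (hαsupp h))
  -- the pointwise identity
  have hpt : ∀ s a : ℝ, Real.sqrt (a ^ 2 + α a + s * β a)
      - Real.sqrt (a ^ 2 + s * β a) = φ a := by
    intro s a
    by_cases hb : β a = 0
    · simp [hφdef, hb]
    · have ha34 : a ∈ Set.Ioo (3:ℝ) 4 := by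
        by_contra h; exact hb (hβ0 a h)
      have hαz : α a = 0 := hα0 a (by intro h; linarith [h.2, ha34.1])
      simp [hφdef, hαz]
  have hMnn : 0 ≤ M := by
    rw [hMdef]
    exact intervalIntegral.integral_nonneg (by norm_num)
      (fun a _ => Real.sqrt_nonneg _)
  -- choose δ₀
  refine ⟨min (1/2) (c / (17 * (M + 1))), ⟨lt_min (by norm_num)
    (div_pos hc (by linarith)), lt_of_le_of_lt (min_le_left _ _) (by norm_num)⟩, ?_⟩
  rintro δ ⟨hδ0, hδle⟩ s ⟨hs0, hs1⟩ x ⟨hx3, hx4⟩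
  have hδhalf : δ ≤ 1/2 := hδle.trans (min_le_left _ _)
  have hδc : 17 * (M + 1) * δ ≤ c := by
    have := hδle.trans (min_le_right _ _)
    rw [le_div_iff₀ (by linarith : (0:ℝ) < 17 * (M + 1))] at this
    linarith
  -- integrands
  have hfc : Continuous fun a => Real.sqrt (a ^ 2 + α a + s * β a) :=
    (((continuous_pow 2).add hα).add (continuous_const.mul hβ)).sqrt
  have hgc : Continuous fun a => Real.sqrt (a ^ 2 + s * β a) :=
    ((continuous_pow 2).add (continuous_const.mul hβ)).sqrt
  set F : ℝ := ∫ a in (0:ℝ)..x, Real.sqrt (a ^ 2 + α a + s * β a) with hFdef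
  set G : ℝ := ∫ a in (0:ℝ)..x, Real.sqrt (a ^ 2 + s * β a) with hGdef
  have hsplit : (∫ a in (0:ℝ)..x,
      ((1 - δ) ^ 2 * Real.sqrt (a ^ 2 + α a + s * β a)
        - (1 + δ) ^ 2 * Real.sqrt (a ^ 2 + s * β a)))
      = (1 - δ) ^ 2 * F - (1 + δ) ^ 2 * G := by
    rw [hFdef, hGdef, ← intervalIntegral.integral_const_mul,
      ← intervalIntegral.integral_const_mul,
      ← intervalIntegral.integral_sub
        (f := fun a => (1 - δ) ^ 2 * Real.sqrt (a ^ 2 + α a + s * β a))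
        (g := fun a => (1 + δ) ^ 2 * Real.sqrt (a ^ 2 + s * β a))
        ((continuous_const.mul hfc).intervalIntegrable _ _)
        ((continuous_const.mul hgc).intervalIntegrable _ _)]
  rw [hsplit]
  -- F - G = ∫ φ ≥ c
  have hFG : F - G = ∫ a in (0:ℝ)..x, φ a := by
    rw [hFdef, hGdef, ← intervalIntegral.integral_sub
      (hfc.intervalIntegrable _ _) (hgc.intervalIntegrable _ _)]
    exact intervalIntegral.integral_congr fun a _ => hpt s a
  have hφint : (∫ a in (0:ℝ)..x, φ a) = c + ∫ a in (3:ℝ)..x, φ a := by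
    rw [hcdef, intervalIntegral.integral_add_adjacent_intervals
      (hφcont.intervalIntegrable _ _) (hφcont.intervalIntegrable _ _)]
  have htail : 0 ≤ ∫ a in (3:ℝ)..x, φ a :=
    intervalIntegral.integral_nonneg hx3 (fun a _ => hφnn a)
  have hFGc : c ≤ F - G := by
    rw [hFG, hφint]; linarith
  -- bounds on G
  have hG0 : 0 ≤ G :=
    intervalIntegral.integral_nonneg (by linarith) (fun a _ => Real.sqrt_nonneg _)
  have hGM : G ≤ M := by
    have h1 : G ≤ ∫ a in (0:ℝ)..4, Real.sqrt (a ^ 2 + s * β a) := by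
      rw [hGdef, ← intervalIntegral.integral_add_adjacent_intervals
        (hgc.intervalIntegrable 0 x) (hgc.intervalIntegrable x 4)]
      have : 0 ≤ ∫ a in x..(4:ℝ), Real.sqrt (a ^ 2 + s * β a) :=
        intervalIntegral.integral_nonneg hx4 (fun a _ => Real.sqrt_nonneg _)
      linarith
    have h2 : (∫ a in (0:ℝ)..4, Real.sqrt (a ^ 2 + s * β a)) ≤ M := by
      rw [hMdef]
      apply intervalIntegral.integral_mono_on (by norm_num)
        (hgc.intervalIntegrable _ _)
        (((continuous_pow 2).add hβ).sqrt.intervalIntegrable _ _)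
      intro a _
      apply Real.sqrt_le_sqrt
      show a ^ 2 + s * β a ≤ a ^ 2 + β a
      nlinarith [hβnn a]
    linarith
  -- final arithmetic
  have h1 : (1 - δ) ^ 2 * (G + c) ≤ (1 - δ) ^ 2 * F :=
    mul_le_mul_of_nonneg_left (by linarith) (sq_nonneg _)
  have h2 : δ * G ≤ δ * M := mul_le_mul_of_nonneg_left hGM hδ0.le
  have h3 : (1/4 : ℝ) * c ≤ (1 - δ) ^ 2 * c :=
    mul_le_mul_of_nonneg_right (by nlinarith) hc.le
  nlinarith [mul_nonneg hδ0.le hG0]
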